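/- For each positive integer n let kₙ denote the unique root of tan(k) = k in (nπ, nπ + π/2), and let D > 0. Then lim_{t→0⁺} (4πDt)^{3/2} · [ 3/(4π) + (1/2π) ∑_{n=1}^∞ (1+kₙ²) e^{−Dkₙ² t} ] = 1; that is, the on-diagonal Neumann heat kernel of the unit ball at the origin, G(0,0,t), behaves like the free-space Gaussian value (4πDt)^{−3/2} as t → 0⁺. -/

import Mathlib

open Real MeasureTheory Filter Set

noncomputable def heatC (k : ℕ → ℝ) (s : ℝ) (m : ℤ) : ℝ :=
  if 1 ≤ m then (s ^ 2 + (s * k m.toNat) ^ 2) * Real.exp (-(s * k m.toNat) ^ 2) else 0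

noncomputable def heatPhi (k : ℕ → ℝ) (s x : ℝ) : ℝ := heatC k s ⌊x / (π * s)⌋

noncomputable def heatBnd (x : ℝ) : ℝ :=
  if 0 < x then (1 + (x + π) ^ 2) * Real.exp (π ^ 2 - x ^ 2 / 4) else 0

lemma heatC_nonneg (k : ℕ → ℝ) (s : ℝ) (m : ℤ) : 0 ≤ heatC k s m := by
  unfold heatC; split
  · positivity
  · exact le_rfl

lemma heatPhi_nonneg (k : ℕ → ℝ) (s x : ℝ) : 0 ≤ heatPhi k s x := heatC_nonneg _ _ _

lemma heatBnd_nonneg (x : ℝ) : 0 ≤ heatBnd x := by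
  unfold heatBnd; split
  · positivity
  · exact le_rfl

lemma heatPhi_measurable (k : ℕ → ℝ) (s : ℝ) : Measurable (heatPhi k s) := by
  have h1 : Measurable (heatC k s) := Measurable.of_discrete
  have h2 : Measurable (fun x : ℝ => ⌊x / (π * s)⌋) := (measurable_id.div_const _).floor
  exact h1.comp h2

lemma heatBnd_measurable : Measurable heatBnd := by
  unfold heatBnd
  apply Measurable.ite
  · exact measurableSet_Ioi
  · fun_prop
  · fun_prop

set_option maxHeartbeats 2000000 in
lemma heatPhi_le_bnd (k : ℕ → ℝ)
    (hb : ∀ n : ℕ, 1 ≤ n → (n : ℝ) * π < k n ∧ k n < (n : ℝ) * π + π / 2)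
    {s : ℝ} (hs : s ∈ Set.Ioc (0:ℝ) 1) (x : ℝ) : heatPhi k s x ≤ heatBnd x := by
  obtain ⟨hs0, hs1⟩ := hs
  have hπs : 0 < π * s := mul_pos pi_pos hs0
  unfold heatPhi heatC
  by_cases h1 : 1 ≤ ⌊x / (π * s)⌋
  · set m := ⌊x / (π * s)⌋ with hm
    rw [if_pos h1]
    have hmle : (m : ℝ) ≤ x / (π * s) := Int.floor_le _
    have hltm : x / (π * s) < (m : ℝ) + 1 := Int.lt_floor_add_one _
    clear_value m
    have hxlow : (m : ℝ) * (π * s) ≤ x := by rwa [← le_div_iff₀ hπs]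
    have hxhigh : x < ((m : ℝ) + 1) * (π * s) := by rwa [← div_lt_iff₀ hπs]
    have hm1 : (1 : ℝ) ≤ (m : ℝ) := by exact_mod_cast h1
    have hx0 : 0 < x := by nlinarith
    have hnm : ((m.toNat : ℕ) : ℝ) = (m : ℝ) := by
      exact_mod_cast congrArg (fun z : ℤ => (z : ℝ)) (Int.toNat_of_nonneg (by omega))
    obtain ⟨hk1, hk2⟩ := hb m.toNat (by omega)
    rw [hnm] at hk1 hk2
    set y := s * k m.toNat with hy
    have hy1 : (m : ℝ) * π * s < y := by
      rw [hy]; nlinarith [mul_lt_mul_of_pos_left hk1 hs0]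
    have hy2 : y < ((m : ℝ) * π + π / 2) * s := by
      rw [hy]; nlinarith [mul_lt_mul_of_pos_left hk2 hs0]
    clear_value y
    have hylow : x - π * s < y := by nlinarith
    have hyhigh : y < x + π * s := by nlinarith [pi_pos]
    have hy0 : 0 < y := by nlinarith [pi_pos]
    rw [heatBnd, if_pos hx0]
    have hπs1 : π * s ≤ π := by nlinarith [pi_pos]
    have hyx : y ≤ x + π := by nlinarith
    have hsq : y ^ 2 ≤ (x + π) ^ 2 := by nlinarith [hy0.le]
    have hs2 : s ^ 2 ≤ 1 := by nlinarith
    have hexp : Real.exp (-y ^ 2) ≤ Real.exp (π ^ 2 - x ^ 2 / 4) := by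
      apply Real.exp_le_exp.2
      by_cases hx2 : x ≤ 2 * π
      · nlinarith
      · have hyx2 : x / 2 < y := by nlinarith
        nlinarith
    calc (s ^ 2 + y ^ 2) * Real.exp (-y ^ 2)
        ≤ (1 + (x + π) ^ 2) * Real.exp (-y ^ 2) := by
          apply mul_le_mul_of_nonneg_right _ (Real.exp_pos _).le
          linarith
      _ ≤ (1 + (x + π) ^ 2) * Real.exp (π ^ 2 - x ^ 2 / 4) := by
          apply mul_le_mul_of_nonneg_left hexp (by positivity)
  · rw [if_neg h1]; exact heatBnd_nonneg x

set_option maxHeartbeats 2000000 in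
lemma heatBnd_integrable : Integrable heatBnd := by
  have h4 : (0:ℝ) < (4:ℝ)⁻¹ := by norm_num
  have h1 := (integrable_exp_neg_mul_sq h4).const_mul ((1:ℝ) + π ^ 2)
  have h2 := (integrable_mul_exp_neg_mul_sq h4).const_mul (2 * π)
  have h3 : Integrable (fun x : ℝ => x ^ 2 * Real.exp (-(4:ℝ)⁻¹ * x ^ 2)) := by
    have h := integrable_rpow_mul_exp_neg_mul_sq h4 (s := 2) (by norm_num)
    apply h.congr
    apply Filter.Eventually.of_forall
    intro x
    simp only [show ((2:ℝ)) = ((2:ℕ) : ℝ) from by norm_num, Real.rpow_natCast]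
  have hsum := ((h1.add h2).add h3).const_mul (Real.exp (π ^ 2))
  have hM : Integrable (fun x : ℝ =>
      Real.exp (π ^ 2) * ((1 + (x + π) ^ 2) * Real.exp (-(4:ℝ)⁻¹ * x ^ 2))) := by
    apply hsum.congr
    apply Filter.Eventually.of_forall
    intro x
    simp only [Pi.add_apply]
    ring
  apply hM.mono' heatBnd_measurable.aestronglyMeasurable
  apply Filter.Eventually.of_forall
  intro x
  rw [Real.norm_eq_abs, abs_of_nonneg (heatBnd_nonneg x)]
  unfold heatBnd
  split
  · apply le_of_eq
    rw [show π ^ 2 - x ^ 2 / 4 = π ^ 2 + -(4:ℝ)⁻¹ * x ^ 2 by ring, Real.exp_add]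
    ring
  · positivity

lemma heatPhi_integrable (k : ℕ → ℝ)
    (hb : ∀ n : ℕ, 1 ≤ n → (n : ℝ) * π < k n ∧ k n < (n : ℝ) * π + π / 2)
    {s : ℝ} (hs : s ∈ Set.Ioc (0:ℝ) 1) : Integrable (heatPhi k s) := by
  apply heatBnd_integrable.mono' (heatPhi_measurable k s).aestronglyMeasurable
  apply Filter.Eventually.of_forall
  intro x
  rw [Real.norm_eq_abs, abs_of_nonneg (heatPhi_nonneg k s x)]
  exact heatPhi_le_bnd k hb hs x

set_option maxHeartbeats 2000000 in
lemma integral_heatPhi_eq (k : ℕ → ℝ)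
    (hb : ∀ n : ℕ, 1 ≤ n → (n : ℝ) * π < k n ∧ k n < (n : ℝ) * π + π / 2)
    {s : ℝ} (hs : s ∈ Set.Ioc (0:ℝ) 1) :
    ∫ x, heatPhi k s x
      = π * s ^ 3 * ∑' n : ℕ, (1 + k (n + 1) ^ 2) * Real.exp (-s ^ 2 * k (n + 1) ^ 2) := by
  obtain ⟨hs0, hs1⟩ := hs
  have hπs : 0 < π * s := mul_pos pi_pos hs0
  set A : ℕ → Set ℝ := fun n => Ico (((n:ℝ) + 1) * (π * s)) (((n:ℝ) + 2) * (π * s)) with hA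
  have hzero : ∀ x ∉ ⋃ n, A n, heatPhi k s x = 0 := by
    intro x hx
    unfold heatPhi heatC
    rw [if_neg]
    intro h1
    apply hx
    set m := ⌊x / (π * s)⌋ with hm
    refine Set.mem_iUnion.2 ⟨(m - 1).toNat, ?_⟩
    have hmc : (((m - 1).toNat : ℕ) : ℝ) = (m : ℝ) - 1 := by
      have := Int.toNat_of_nonneg (show (0:ℤ) ≤ m - 1 by omega)
      exact_mod_cast congrArg (fun z : ℤ => (z : ℝ)) this
    have hmle : (m : ℝ) ≤ x / (π * s) := Int.floor_le _
    have hltm : x / (π * s) < (m : ℝ) + 1 := Int.lt_floor_add_one _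
    have hxlow : (m : ℝ) * (π * s) ≤ x := by rwa [← le_div_iff₀ hπs]
    have hxhigh : x < ((m : ℝ) + 1) * (π * s) := by rwa [← div_lt_iff₀ hπs]
    constructor
    · simp only [hA, hmc]; nlinarith
    · simp only [hA, hmc]; nlinarith
  have h1 : ∫ x, heatPhi k s x = ∫ x in ⋃ n, A n, heatPhi k s x :=
    (setIntegral_eq_integral_of_forall_compl_eq_zero hzero).symm
  have hdisj : Pairwise (Function.onFun Disjoint A) := by
    have key : ∀ i j : ℕ, i < j → Disjoint (A i) (A j) := by
      intro i j hij
      apply Set.Ico_disjoint_Ico.2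
      have hij' : ((i:ℝ)) + 2 ≤ ((j:ℝ)) + 1 := by
        have : (i:ℝ) + 1 ≤ (j:ℝ) := by exact_mod_cast hij
        linarith
      calc min (((i:ℝ) + 2) * (π * s)) (((j:ℝ) + 2) * (π * s))
          ≤ ((i:ℝ) + 2) * (π * s) := min_le_left _ _
        _ ≤ ((j:ℝ) + 1) * (π * s) := by nlinarith
        _ ≤ max (((i:ℝ) + 1) * (π * s)) (((j:ℝ) + 1) * (π * s)) := le_max_right _ _
    intro i j hij
    rcases lt_or_gt_of_ne hij with h | h
    · exact key _ _ h
    · exact (key _ _ h).symm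
  have h2 : ∫ x in ⋃ n, A n, heatPhi k s x = ∑' n, ∫ x in A n, heatPhi k s x :=
    integral_iUnion (fun n => measurableSet_Ico) hdisj
      (heatPhi_integrable k hb ⟨hs0, hs1⟩).integrableOn
  have h3 : ∀ n : ℕ, ∫ x in A n, heatPhi k s x
      = (π * s ^ 3) * ((1 + k (n + 1) ^ 2) * Real.exp (-s ^ 2 * k (n + 1) ^ 2)) := by
    intro n
    have hconst : ∀ x ∈ A n,
        heatPhi k s x = s ^ 2 * ((1 + k (n + 1) ^ 2) * Real.exp (-s ^ 2 * k (n + 1) ^ 2)) := by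
      intro x hx
      obtain ⟨hx1, hx2⟩ := hx
      have hfl : ⌊x / (π * s)⌋ = (n : ℤ) + 1 := by
        rw [Int.floor_eq_iff]
        constructor
        · rw [le_div_iff₀ hπs]; push_cast; linarith
        · rw [div_lt_iff₀ hπs]; push_cast; linarith
      unfold heatPhi heatC
      rw [hfl, if_pos (by omega : (1:ℤ) ≤ (n:ℤ) + 1)]
      have htn : ((n : ℤ) + 1).toNat = n + 1 := by omega
      rw [htn, mul_pow, show -(s ^ 2 * k (n+1) ^ 2) = -s ^ 2 * k (n+1) ^ 2 by ring]
      ring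
    rw [setIntegral_congr_fun measurableSet_Ico hconst, setIntegral_const, measureReal_def, Real.volume_Ico,
      smul_eq_mul, ENNReal.toReal_ofReal (by nlinarith :
        (0:ℝ) ≤ ((n:ℝ) + 2) * (π * s) - ((n:ℝ) + 1) * (π * s))]
    ring
  rw [h1, h2]
  calc ∑' n, ∫ x in A n, heatPhi k s x
      = ∑' n : ℕ, (π * s ^ 3) * ((1 + k (n + 1) ^ 2) * Real.exp (-s ^ 2 * k (n + 1) ^ 2)) :=
        tsum_congr h3
    _ = π * s ^ 3 * ∑' n : ℕ, (1 + k (n + 1) ^ 2) * Real.exp (-s ^ 2 * k (n + 1) ^ 2) :=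
        tsum_mul_left

set_option maxHeartbeats 2000000 in
lemma heatPhi_bracket (k : ℕ → ℝ)
    (hb : ∀ n : ℕ, 1 ≤ n → (n : ℝ) * π < k n ∧ k n < (n : ℝ) * π + π / 2)
    {s x : ℝ} (hs0 : 0 < s) (hsx : s < x / π) :
    1 ≤ ⌊x / (π * s)⌋ ∧ x - π * s ≤ s * k (⌊x / (π * s)⌋).toNat ∧
      s * k (⌊x / (π * s)⌋).toNat ≤ x + π * s := by
  have hπs : 0 < π * s := mul_pos pi_pos hs0
  have hx1 : 1 < x / (π * s) := by
    rw [lt_div_iff₀ hπs]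
    have := (lt_div_iff₀ pi_pos).1 hsx
    nlinarith
  have h1 : 1 ≤ ⌊x / (π * s)⌋ := Int.le_floor.2 (by exact_mod_cast hx1.le)
  set m := ⌊x / (π * s)⌋ with hm
  have hmle : (m : ℝ) ≤ x / (π * s) := Int.floor_le _
  have hltm : x / (π * s) < (m : ℝ) + 1 := Int.lt_floor_add_one _
  have hxlow : (m : ℝ) * (π * s) ≤ x := by rwa [← le_div_iff₀ hπs]
  have hxhigh : x < ((m : ℝ) + 1) * (π * s) := by rwa [← div_lt_iff₀ hπs]
  have hnm : ((m.toNat : ℕ) : ℝ) = (m : ℝ) := by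
    exact_mod_cast congrArg (fun z : ℤ => (z : ℝ)) (Int.toNat_of_nonneg (by omega))
  have hn1 : 1 ≤ m.toNat := by omega
  obtain ⟨hk1, hk2⟩ := hb m.toNat hn1
  refine ⟨h1, ?_, ?_⟩
  · rw [← hnm] at hxhigh; nlinarith
  · rw [← hnm] at hxlow; nlinarith [pi_pos]

set_option maxHeartbeats 2000000 in
lemma tendsto_integral_heatPhi (k : ℕ → ℝ)
    (hb : ∀ n : ℕ, 1 ≤ n → (n : ℝ) * π < k n ∧ k n < (n : ℝ) * π + π / 2) :
    Tendsto (fun s => ∫ x, heatPhi k s x) (nhdsWithin 0 (Set.Ioi 0))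
      (nhds (Real.sqrt π / 4)) := by
  have hLint : ∫ x : ℝ, (if 0 < x then x ^ 2 * Real.exp (-x ^ 2) else 0)
      = Real.sqrt π / 4 := by
    have hind : (fun x : ℝ => if 0 < x then x ^ 2 * Real.exp (-x ^ 2) else 0)
        = (Set.Ioi (0:ℝ)).indicator (fun x => x ^ 2 * Real.exp (-x ^ 2)) := by
      funext x; simp [Set.indicator_apply, Set.mem_Ioi]
    rw [hind, integral_indicator measurableSet_Ioi]
    have h2 : ∀ x ∈ Set.Ioi (0:ℝ),
        x ^ 2 * Real.exp (-x ^ 2) = x ^ (2:ℝ) * Real.exp (-x ^ (2:ℝ)) := by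
      intro x _
      rw [show ((2:ℝ)) = ((2:ℕ) : ℝ) by norm_num, Real.rpow_natCast]
    rw [setIntegral_congr_fun measurableSet_Ioi h2,
      integral_rpow_mul_exp_neg_rpow two_pos (by norm_num),
      show ((2:ℝ) + 1) / 2 = 1 / 2 + 1 by norm_num,
      Real.Gamma_add_one (by norm_num), Real.Gamma_one_half_eq]
    ring
  rw [← hLint]
  apply MeasureTheory.tendsto_integral_filter_of_dominated_convergence heatBnd
  · exact Filter.Eventually.of_forall fun s =>
      (heatPhi_measurable k s).aestronglyMeasurable
  · filter_upwards [Ioc_mem_nhdsGT zero_lt_one] with s hs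
    apply Filter.Eventually.of_forall
    intro x
    rw [Real.norm_eq_abs, abs_of_nonneg (heatPhi_nonneg k s x)]
    exact heatPhi_le_bnd k hb hs x
  · exact heatBnd_integrable
  · have hx_ae : ∀ᵐ x : ℝ, x ≠ 0 := by
      rw [MeasureTheory.ae_iff]
      have : {x : ℝ | ¬ x ≠ 0} = {0} := by ext x; simp
      rw [this]
      exact measure_singleton 0
    filter_upwards [hx_ae] with x hx
    rcases lt_or_gt_of_ne hx with hneg | hpos
    · rw [if_neg (by linarith)]
      apply Tendsto.congr' _ tendsto_const_nhds
      filter_upwards [self_mem_nhdsWithin] with s hs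
      have hπs : 0 < π * s := mul_pos pi_pos hs
      unfold heatPhi heatC
      rw [if_neg]
      apply not_le.2
      apply Int.floor_lt.2
      push_cast
      calc x / (π * s) < 0 := div_neg_of_neg_of_pos hneg hπs
        _ < 1 := one_pos
    · rw [if_pos hpos]
      have hmemIoo : Set.Ioo (0:ℝ) (x / π) ∈ nhdsWithin (0:ℝ) (Set.Ioi 0) :=
        Ioo_mem_nhdsGT (div_pos hpos pi_pos)
      have hY : Tendsto (fun s => s * k (⌊x / (π * s)⌋).toNat)
          (nhdsWithin 0 (Set.Ioi 0)) (nhds x) := by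
        apply tendsto_of_tendsto_of_tendsto_of_le_of_le'
          (g := fun s : ℝ => x - π * s) (h := fun s : ℝ => x + π * s)
        · have : Tendsto (fun s : ℝ => x - π * s) (nhds 0) (nhds (x - π * 0)) :=
            tendsto_const_nhds.sub (tendsto_id.const_mul π)
          simpa using this.mono_left nhdsWithin_le_nhds
        · have : Tendsto (fun s : ℝ => x + π * s) (nhds 0) (nhds (x + π * 0)) :=
            tendsto_const_nhds.add (tendsto_id.const_mul π)
          simpa using this.mono_left nhdsWithin_le_nhds
        · filter_upwards [hmemIoo] with s hs
          exact (heatPhi_bracket k hb hs.1 hs.2).2.1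
        · filter_upwards [hmemIoo] with s hs
          exact (heatPhi_bracket k hb hs.1 hs.2).2.2
      have hS : Tendsto (fun s : ℝ => s) (nhdsWithin 0 (Set.Ioi 0)) (nhds 0) :=
        tendsto_id.mono_left nhdsWithin_le_nhds
      have hmain : Tendsto
          (fun s => (s ^ 2 + (s * k (⌊x / (π * s)⌋).toNat) ^ 2) *
            Real.exp (-(s * k (⌊x / (π * s)⌋).toNat) ^ 2))
          (nhdsWithin 0 (Set.Ioi 0)) (nhds ((0 ^ 2 + x ^ 2) * Real.exp (-x ^ 2))) :=
        ((hS.pow 2).add (hY.pow 2)).mul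
          ((Real.continuous_exp.tendsto _).comp (hY.pow 2).neg)
      have hmain' : Tendsto
          (fun s => (s ^ 2 + (s * k (⌊x / (π * s)⌋).toNat) ^ 2) *
            Real.exp (-(s * k (⌊x / (π * s)⌋).toNat) ^ 2))
          (nhdsWithin 0 (Set.Ioi 0)) (nhds (x ^ 2 * Real.exp (-x ^ 2))) := by
        simpa using hmain
      apply hmain'.congr'
      filter_upwards [hmemIoo] with s hs
      have h1 := (heatPhi_bracket k hb hs.1 hs.2).1
      unfold heatPhi heatC
      rw [if_pos h1]

set_option maxHeartbeats 2000000 in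
lemma tendsto_rescaled_sum (k : ℕ → ℝ)
    (hb : ∀ n : ℕ, 1 ≤ n → (n : ℝ) * π < k n ∧ k n < (n : ℝ) * π + π / 2) :
    Tendsto (fun a : ℝ => a ^ ((3:ℝ)/2) *
        ∑' n : ℕ, (1 + k (n + 1) ^ 2) * Real.exp (-a * k (n + 1) ^ 2))
      (nhdsWithin 0 (Set.Ioi 0)) (nhds (Real.sqrt π / (4 * π))) := by
  have hsqrt : Tendsto Real.sqrt (nhdsWithin (0:ℝ) (Set.Ioi 0))
      (nhdsWithin (0:ℝ) (Set.Ioi 0)) := by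
    apply tendsto_nhdsWithin_of_tendsto_nhds_of_eventually_within
    · simpa using (Real.continuous_sqrt.tendsto 0).mono_left nhdsWithin_le_nhds
    · filter_upwards [self_mem_nhdsWithin] with a ha
      exact Real.sqrt_pos.2 ha
  have h0 := (tendsto_integral_heatPhi k hb).comp hsqrt
  simp only [Function.comp_def] at h0
  have h1 := h0.const_mul (1/π)
  have harith : 1/π * (Real.sqrt π / 4) = Real.sqrt π / (4 * π) := by ring
  rw [harith] at h1
  apply h1.congr'
  filter_upwards [Ioc_mem_nhdsGT zero_lt_one] with a ha
  obtain ⟨ha0, ha1⟩ := ha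
  have hsa : Real.sqrt a ∈ Set.Ioc (0:ℝ) 1 := by
    refine ⟨Real.sqrt_pos.2 ha0, ?_⟩
    rw [show (1:ℝ) = Real.sqrt 1 by simp]
    exact Real.sqrt_le_sqrt ha1
  rw [integral_heatPhi_eq k hb hsa]
  have hs2 : Real.sqrt a ^ 2 = a := Real.sq_sqrt ha0.le
  have hs3 : Real.sqrt a ^ 3 = a ^ ((3:ℝ)/2) := by
    rw [Real.sqrt_eq_rpow, ← Real.rpow_natCast (a ^ (1/(2:ℝ))) 3, ← Real.rpow_mul ha0.le]
    norm_num
  rw [hs2, hs3]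
  have hπ : (π:ℝ) ≠ 0 := pi_ne_zero
  field_simp
  ring_nf
  congr 1
  ext n
  ring

lemma heat_arith :
    (4 * π) ^ ((3:ℝ)/2) * (0 * (3 / (4 * π)) + 1 / (2 * π) * (Real.sqrt π / (4 * π))) = 1 := by
  have h1 : (4 * π : ℝ) ^ ((3:ℝ)/2) = (4 * π) * Real.sqrt (4 * π) := by
    rw [show ((3:ℝ)/2) = 1 + 1/2 by norm_num, Real.rpow_add (by positivity), Real.rpow_one,
      ← Real.sqrt_eq_rpow]
  have h2 : Real.sqrt (4 * π) = 2 * Real.sqrt π := by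
    rw [show (4:ℝ) * π = 2 ^ 2 * π by ring, Real.sqrt_mul (by positivity),
      Real.sqrt_sq (by norm_num)]
  have hss : Real.sqrt π * Real.sqrt π = π := Real.mul_self_sqrt pi_pos.le
  rw [h1, h2]
  have hπ : (π:ℝ) ≠ 0 := pi_ne_zero
  field_simp
  nlinarith [hss, pi_pos]

set_option maxHeartbeats 2000000 in
open Real in
/-- With kₙ the unique root of tan(k) = k in (nπ, nπ + π/2) and D > 0,
(4πDt)^{3/2} · G(0,0,t) → 1 as t → 0⁺, where
G(0,0,t) = 3/(4π) + (1/2π) ∑_{n≥1} (1+kₙ²) e^{−Dkₙ²t} is the on-diagonal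
Neumann heat kernel of the unit ball at the origin. -/
theorem heat_kernel_short_time_diagonal (k : ℕ → ℝ)
    (hk : ∀ n : ℕ, 1 ≤ n →
      k n ∈ Set.Ioo (n * π) (n * π + π / 2) ∧ Real.tan (k n) = k n)
    (D : ℝ) (hD : 0 < D) :
    Filter.Tendsto
      (fun t : ℝ => (4 * π * D * t) ^ ((3:ℝ) / 2) *
        (3 / (4 * π) + (1 / (2 * π)) *
          ∑' n : ℕ, (1 + k (n + 1) ^ 2) * Real.exp (-D * k (n + 1) ^ 2 * t)))
      (nhdsWithin 0 (Set.Ioi 0)) (nhds 1) := by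
  have hb : ∀ n : ℕ, 1 ≤ n → (n : ℝ) * π < k n ∧ k n < (n : ℝ) * π + π / 2 := by
    intro n hn
    obtain ⟨hmem, -⟩ := hk n hn
    exact ⟨hmem.1, hmem.2⟩
  have hDt : Tendsto (fun t : ℝ => D * t) (nhdsWithin 0 (Set.Ioi 0))
      (nhdsWithin 0 (Set.Ioi 0)) := by
    apply tendsto_nhdsWithin_of_tendsto_nhds_of_eventually_within
    · have : Tendsto (fun t : ℝ => D * t) (nhds 0) (nhds (D * 0)) :=
        tendsto_id.const_mul D
      simpa using this.mono_left nhdsWithin_le_nhds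
    · filter_upwards [self_mem_nhdsWithin] with t ht
      exact mul_pos hD ht
  have hmain := (tendsto_rescaled_sum k hb).comp hDt
  simp only [Function.comp_def] at hmain
  have hpow : Tendsto (fun t : ℝ => (D * t) ^ ((3:ℝ)/2))
      (nhdsWithin 0 (Set.Ioi 0)) (nhds 0) := by
    have h1 : Tendsto (fun y : ℝ => y ^ ((3:ℝ)/2)) (nhds 0) (nhds 0) := by
      have := (Real.continuousAt_rpow_const 0 ((3:ℝ)/2) (Or.inr (by norm_num))).tendsto
      simpa [Real.zero_rpow (by norm_num : ((3:ℝ)/2) ≠ 0)] using this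
    exact h1.comp (hDt.mono_right nhdsWithin_le_nhds)
  have hcomb : Tendsto (fun t : ℝ => (4 * π) ^ ((3:ℝ)/2) *
        ((D * t) ^ ((3:ℝ)/2) * (3 / (4 * π)) + (1 / (2 * π)) *
          ((D * t) ^ ((3:ℝ)/2) *
            ∑' n : ℕ, (1 + k (n + 1) ^ 2) * Real.exp (-(D * t) * k (n + 1) ^ 2))))
      (nhdsWithin 0 (Set.Ioi 0))
      (nhds ((4 * π) ^ ((3:ℝ)/2) *
        (0 * (3 / (4 * π)) + 1 / (2 * π) * (Real.sqrt π / (4 * π))))) := by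
    apply Tendsto.const_mul
    exact (hpow.mul_const _).add (hmain.const_mul _)
  rw [heat_arith] at hcomb
  apply hcomb.congr'
  filter_upwards [self_mem_nhdsWithin] with t ht
  have h4π : (0:ℝ) ≤ 4 * π := by positivity
  have hDt0 : (0:ℝ) ≤ D * t := (mul_pos hD ht).le
  have htsum : ∑' n : ℕ, (1 + k (n + 1) ^ 2) * Real.exp (-(D * t) * k (n + 1) ^ 2)
      = ∑' n : ℕ, (1 + k (n + 1) ^ 2) * Real.exp (-D * k (n + 1) ^ 2 * t) :=
    tsum_congr fun n => by ring_nf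
  rw [show (4 * π * D * t : ℝ) = (4 * π) * (D * t) by ring, Real.mul_rpow h4π hDt0, ← htsum]
  ring
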